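/- For λ in the Gårding cone Γ_k and integers n ≥ k > l ≥ 0, Σ_{i=1}^n ∂/∂λ_i [ (σ_k/σ_l)^{1/(k-l)} ](λ) ≥ [C(n,k)/C(n,l)]^{1/(k-l)}. -/

import Mathlib

/-- The `j`-th elementary symmetric polynomial of `lam ∈ ℝ^n`. -/
def esymm (n j : ℕ) (lam : Fin n → ℝ) : ℝ :=
  ∑ s ∈ Finset.univ.powersetCard j, ∏ i ∈ s, lam i

/-- The Gårding cone `Γ_k = {λ ∈ ℝ^n : σ_i(λ) > 0, 1 ≤ i ≤ k}`. -/
def gardingCone (n k : ℕ) : Set (Fin n → ℝ) :=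
  {lam | ∀ i : ℕ, 1 ≤ i → i ≤ k → 0 < esymm n i lam}

def esA (n : ℕ) (j : ℕ) (lam : Fin n → ℝ) (i : Fin n) : ℝ :=
  ∑ s ∈ (Finset.univ.erase i).powersetCard j, ∏ t ∈ s, lam t

def esD (n : ℕ) (j : ℕ) (lam : Fin n → ℝ) (i : Fin n) : ℝ :=
  if j = 0 then 0 else esA n (j-1) lam i

open Polynomial in
lemma deriv_step (s : Multiset ℝ) {m : ℕ} (hs : Multiset.card s = m + 1) :
    ∃ t : Multiset ℝ, Multiset.card t = m ∧
      ∀ j : ℕ, ((m+1 : ℕ) : ℝ) * t.esymm j = ((m + 1 - j : ℕ) : ℝ) * s.esymm j := by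
  set P : ℝ[X] := (s.map fun a => X - C a).prod with hP
  have hmonic : P.Monic := monic_multiset_prod_of_monic _ _ fun a _ => monic_X_sub_C a
  have hdeg : P.natDegree = m + 1 := by
    rw [hP, natDegree_multiset_prod_X_sub_C_eq_card, hs]
  have hroots : P.roots = s := roots_multiset_prod_X_sub_C s
  have h1 := P.card_roots_le_derivative
  have h2 := (derivative P).card_roots'
  have h3 : (derivative P).natDegree ≤ m := by
    have := natDegree_derivative_le P
    omega
  have hcard : Multiset.card (derivative P).roots = m := by
    rw [hroots, hs] at h1; omega
  have hdeg' : (derivative P).natDegree = m := le_antisymm h3 (hcard ▸ h2)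
  set t := (derivative P).roots with ht
  have hfact : derivative P = C ((derivative P).leadingCoeff) * (t.map fun a => X - C a).prod :=
    (C_leadingCoeff_mul_prod_multiset_X_sub_C (hcard.trans hdeg'.symm)).symm
  have hlc : (derivative P).leadingCoeff = (m + 1 : ℝ) := by
    rw [Polynomial.leadingCoeff, hdeg', coeff_derivative]
    have : P.coeff (m + 1) = 1 := by
      have := hmonic.leadingCoeff
      rwa [Polynomial.leadingCoeff, hdeg] at this
    rw [this]; push_cast; ring
  refine ⟨t, hcard, fun j => ?_⟩
  rcases le_or_gt j m with hj | hj
  · -- compare coeff at m - j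
    have hcoeffP : P.coeff (m + 1 - j) = (-1) ^ j * s.esymm j := by
      have h := Multiset.prod_X_sub_C_coeff s (k := m + 1 - j) (by rw [hs]; omega)
      rw [hs] at h
      rw [← hP] at h
      have : m + 1 - (m + 1 - j) = j := by omega
      rw [this] at h
      exact h
    have hcoeffD : (derivative P).coeff (m - j) = ((m + 1 - j : ℕ) : ℝ) * ((-1) ^ j * s.esymm j) := by
      rw [coeff_derivative]
      have e1 : m - j + 1 = m + 1 - j := by omega
      rw [e1, hcoeffP]
      have e2 : ((m - j : ℕ) : ℝ) + 1 = ((m + 1 - j : ℕ) : ℝ) := by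
        have : (m - j : ℕ) + 1 = m + 1 - j := by omega
        rw [← this]; push_cast; ring
      rw [e2]; ring
    have hcoeffD2 : (derivative P).coeff (m - j) = ((m + 1 : ℕ) : ℝ) * ((-1) ^ j * t.esymm j) := by
      rw [hfact, coeff_C_mul, hlc]
      have h := Multiset.prod_X_sub_C_coeff t (k := m - j) (by rw [hcard]; omega)
      rw [hcard] at h
      have : m - (m - j) = j := by omega
      rw [this] at h
      rw [h]; push_cast; ring
    have hcancel : ((m + 1 : ℕ) : ℝ) * ((-1) ^ j * t.esymm j)
        = ((m + 1 - j : ℕ) : ℝ) * ((-1) ^ j * s.esymm j) := by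
      rw [← hcoeffD2, hcoeffD]
    have hne : ((-1 : ℝ)) ^ j ≠ 0 := by positivity
    exact mul_left_cancel₀ hne (by linear_combination hcancel)
  · have h0 : t.esymm j = 0 := by
      rw [Multiset.esymm, Multiset.powersetCard_eq_empty _ (by rw [hcard]; omega)]
      simp
    have h1 : (m + 1 - j : ℕ) = 0 := by omega
    rw [h0, h1]
    simp



lemma esymm_bridge (n j : ℕ) (lam : Fin n → ℝ) :
    esymm n j lam = (Finset.univ.val.map lam).esymm j :=
  (Finset.esymm_map_val lam Finset.univ j).symm

lemma two_mul_esymm_two {ι : Type*} [DecidableEq ι] (s : Finset ι) (x : ι → ℝ) :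
    2 * ∑ t ∈ s.powersetCard 2, ∏ i ∈ t, x i
      = (∑ i ∈ s, x i) ^ 2 - ∑ i ∈ s, x i ^ 2 := by
  induction s using Finset.induction with
  | empty =>
      rw [Finset.powersetCard_eq_empty.2 (by simp)]
      simp
  | @insert a s ha ih =>
      rw [show (2:ℕ) = 1 + 1 from rfl, Finset.powersetCard_succ_insert ha,
        Finset.sum_union, Finset.sum_image, Finset.powersetCard_one]
      · simp only [Finset.powersetCard_one, Finset.sum_map, Function.Embedding.coeFn_mk,
          Finset.sum_insert ha]
        have hprod : ∀ b ∈ s, ∏ i ∈ insert a {b}, x i = x a * x b := by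
          intro b hb
          have hab : a ∉ ({b} : Finset ι) := by
            simp only [Finset.mem_singleton]
            rintro rfl; exact ha hb
          rw [Finset.prod_insert hab, Finset.prod_singleton]
        rw [Finset.sum_congr rfl hprod, ← Finset.mul_sum, show Nat.succ 1 = 2 from rfl]
        rw [mul_add, ih]
        ring
      · intro t ht u hu htu
        have hat : a ∉ t := fun h => ha ((Finset.mem_powersetCard.1 ht).1 h)
        have hau : a ∉ u := fun h => ha ((Finset.mem_powersetCard.1 hu).1 h)
        rw [← Finset.erase_insert hat, ← Finset.erase_insert hau, htu]
      · rw [Finset.disjoint_right]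
        rintro t ht hts
        obtain ⟨u, hu, rfl⟩ := Finset.mem_image.1 ht
        exact ha ((Finset.mem_powersetCard.1 hts).1 (Finset.mem_insert_self a u))

lemma esymm_compl (n j : ℕ) (hj : j ≤ n) (lam : Fin n → ℝ) :
    esymm n j lam = ∑ s ∈ Finset.univ.powersetCard (n - j), ∏ i ∈ sᶜ, lam i := by
  unfold esymm
  apply Finset.sum_bij' (fun s _ => sᶜ) (fun s _ => sᶜ)
  · intro a _; exact compl_compl a
  · intro a _; exact compl_compl a
  · intro a _; rw [compl_compl]
  · intro a ha
    rw [Finset.mem_powersetCard_univ] at ha ⊢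
    rw [Finset.card_compl, ha, Fintype.card_fin]
  · intro a ha
    rw [Finset.mem_powersetCard_univ] at ha ⊢
    rw [Finset.card_compl, ha, Fintype.card_fin]
    omega

lemma prod_univ_eq (m : ℕ) (lam : Fin m → ℝ) : esymm m m lam = ∏ i, lam i := by
  rw [esymm_compl m m le_rfl lam, Nat.sub_self, Finset.powersetCard_zero,
    Finset.sum_singleton, Finset.compl_empty]

lemma newton_base (m : ℕ) (hm : 2 ≤ m) (lam : Fin m → ℝ) :
    ((m.choose (m-1) : ℝ))^2 * (esymm m (m-2) lam * esymm m m lam)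
      ≤ ((m.choose (m-2) : ℝ)) * ((m.choose m : ℝ)) * esymm m (m-1) lam ^ 2 := by
  set P : Fin m → ℝ := fun i => ∏ t ∈ ({i}ᶜ : Finset (Fin m)), lam t with hPdef
  have hP1 : esymm m (m-1) lam = ∑ i, P i := by
    rw [esymm_compl m (m-1) (by omega), show m - (m-1) = 1 by omega,
      Finset.powersetCard_one, Finset.sum_map]
    rfl
  have hP2 : esymm m (m-2) lam * esymm m m lam
      = ∑ t ∈ Finset.univ.powersetCard 2, ∏ i ∈ t, P i := by
    rw [esymm_compl m (m-2) (by omega), show m - (m-2) = 2 by omega, prod_univ_eq,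
      Finset.sum_mul]
    refine Finset.sum_congr rfl fun t ht => ?_
    rw [Finset.mem_powersetCard_univ] at ht
    obtain ⟨a, b, hab, rfl⟩ := Finset.card_eq_two.1 ht
    have hQa : ({a, b} : Finset (Fin m))ᶜ = ({b}ᶜ : Finset (Fin m)).erase a := by
      rw [Finset.compl_insert]
    have hQb : ({a, b} : Finset (Fin m))ᶜ = ({a}ᶜ : Finset (Fin m)).erase b := by
      rw [Finset.pair_comm, Finset.compl_insert]
    set Q : ℝ := ∏ t ∈ ({a, b} : Finset (Fin m))ᶜ, lam t with hQdef
    have hPa : P a = lam b * Q := by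
      rw [hPdef, hQdef, hQb]
      exact (Finset.mul_prod_erase _ lam (by simp [Ne.symm hab])).symm
    have hPb : P b = lam a * Q := by
      rw [hPdef, hQdef, hQa]
      exact (Finset.mul_prod_erase _ lam (by simp [hab])).symm
    have huniv : ∏ i, lam i = (lam a * lam b) * Q := by
      rw [← Finset.prod_mul_prod_compl ({a, b} : Finset (Fin m)) lam,
        Finset.prod_pair hab]
    rw [Finset.prod_pair hab, hPa, hPb, huniv]
    ring
  have h5 := two_mul_esymm_two (Finset.univ : Finset (Fin m)) P
  have hCS : (∑ i, P i) ^ 2 ≤ (m : ℝ) * ∑ i, P i ^ 2 := by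
    have := sq_sum_le_card_mul_sum_sq (s := (Finset.univ : Finset (Fin m))) (f := P)
    simpa using this
  have hc2 : 2 * (m.choose 2 : ℝ) = (m : ℝ) * ((m : ℝ) - 1) := by
    have hdvd : 2 ∣ m * (m - 1) := by
      have : m * (m - 1) = (m - 1) * ((m - 1) + 1) := by
        cases m with
        | zero => omega
        | succ mm => simp [Nat.succ_sub_one]; ring
      rw [this]
      exact (Nat.even_mul_succ_self (m - 1)).two_dvd
    have h2 : 2 * m.choose 2 = m * (m - 1) := by
      rw [Nat.choose_two_right, Nat.mul_div_cancel' hdvd]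
    rw [show ((m:ℝ) - 1) = ((m - 1 : ℕ) : ℝ) by rw [Nat.cast_sub (by omega)]; push_cast; ring]
    exact_mod_cast h2
  have e1 : m.choose (m-1) = m := by
    have h := Nat.choose_symm (show m-1 ≤ m by omega)
    rw [show m-(m-1) = 1 by omega] at h
    rw [← h, Nat.choose_one_right]
  have e2 : m.choose (m-2) = m.choose 2 := by
    have h := Nat.choose_symm (show m-2 ≤ m by omega)
    rw [show m-(m-2) = 2 by omega] at h
    exact h.symm
  rw [hP1, hP2, Nat.choose_self, e1, e2]
  have hm1 : (1:ℝ) ≤ (m:ℝ) := by exact_mod_cast (by omega : 1 ≤ m)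
  push_cast
  nlinarith [hCS, h5, hc2, mul_le_mul_of_nonneg_left hCS (by positivity : (0:ℝ) ≤ (m:ℝ))]



lemma exists_tuple (s : Multiset ℝ) (m : ℕ) (hs : Multiset.card s = m) :
    ∃ lam : Fin m → ℝ, Finset.univ.val.map lam = s := by
  obtain ⟨l, rfl⟩ := Quotient.exists_rep s
  have hl : (l : List ℝ).length = m := by simpa using hs
  subst hl
  exact ⟨l.get, by rw [Fin.univ_val_map, List.ofFn_get]; rfl⟩

theorem newton_ms (d : ℕ) : ∀ (n j : ℕ), n = j + 1 + d → 1 ≤ j →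
    ∀ s : Multiset ℝ, Multiset.card s = n →
    ((n.choose j : ℝ))^2 * (s.esymm (j-1) * s.esymm (j+1))
      ≤ (n.choose (j-1) : ℝ) * ((n.choose (j+1) : ℝ)) * s.esymm j ^ 2 := by
  induction d with
  | zero =>
      intro n j hn hj s hs
      obtain rfl : n = j + 1 := by omega
      obtain ⟨lam, hlam⟩ := exists_tuple s (j+1) hs
      have he : ∀ i, s.esymm i = esymm (j+1) i lam := by
        intro i; rw [esymm_bridge, hlam]
      have hb := newton_base (j+1) (by omega) lam
      rw [show j+1-1 = j by omega, show j+1-2 = j-1 by omega] at hb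
      rw [he (j-1), he (j+1), he j]
      exact hb
  | succ d ih =>
      intro n j hn hj s hs
      obtain ⟨t, hts, hrel⟩ := deriv_step s (m := n - 1) (by omega)
      have hc : ∀ i : ℕ, ((n:ℝ)) * t.esymm i = ((n - i : ℕ) : ℝ) * s.esymm i := by
        intro i
        have := hrel i
        rw [show n - 1 + 1 = n by omega] at this
        exact this
      have hih := ih (n-1) j (by omega) hj t hts
      -- cast nat identities
      have cid : ∀ i : ℕ, i ≤ n → (((n-1).choose i : ℝ)) * (n:ℝ) = ((n.choose i : ℝ)) * ((n - i : ℕ) : ℝ) := by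
        intro i hi
        have h := Nat.choose_mul_succ_eq (n-1) i
        rw [show n - 1 + 1 = n by omega] at h
        exact_mod_cast congrArg (fun x : ℕ => (x : ℝ)) h
      set X := s.esymm (j-1) * s.esymm (j+1) with hX
      set Y := s.esymm j ^ 2 with hY
      have A : ((n:ℝ))^2 * (t.esymm (j-1) * t.esymm (j+1))
          = ((n-(j-1) : ℕ) : ℝ) * ((n-(j+1) : ℕ) : ℝ) * X := by
        rw [hX]
        linear_combination ((n:ℝ) * t.esymm (j+1)) * hc (j-1)
          + (((n-(j-1) : ℕ) : ℝ) * s.esymm (j-1)) * hc (j+1)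
      have B : ((n:ℝ))^2 * t.esymm j ^ 2 = ((n-j : ℕ) : ℝ)^2 * Y := by
        rw [hY]
        linear_combination ((n:ℝ) * t.esymm j + ((n-j : ℕ) : ℝ) * s.esymm j) * hc j
      have hρpos : (0:ℝ) < ((n-j:ℕ):ℝ)^2 * (((n-(j-1):ℕ):ℝ) * ((n-(j+1):ℕ):ℝ)) := by
        have h1 : (0:ℕ) < n - j := by omega
        have h2 : (0:ℕ) < n - (j-1) := by omega
        have h3 : (0:ℕ) < n - (j+1) := by omega
        have c1 : (0:ℝ) < ((n-j:ℕ):ℝ) := by exact_mod_cast h1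
        have c2 : (0:ℝ) < ((n-(j-1):ℕ):ℝ) := by exact_mod_cast h2
        have c3 : (0:ℝ) < ((n-(j+1):ℕ):ℝ) := by exact_mod_cast h3
        positivity
      refine le_of_mul_le_mul_left ?_ hρpos
      have h0 := mul_le_mul_of_nonneg_left hih (show (0:ℝ) ≤ (n:ℝ)^2 * (n:ℝ)^2 by positivity)
      calc ((n-j:ℕ):ℝ)^2 * (((n-(j-1):ℕ):ℝ) * ((n-(j+1):ℕ):ℝ)) * ((n.choose j:ℝ)^2 * X)
          = (n:ℝ)^2 * (n:ℝ)^2 * (((n-1).choose j : ℝ)^2 * (t.esymm (j-1) * t.esymm (j+1))) := by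
            linear_combination (-(n:ℝ)^2 * ((n-1).choose j : ℝ)^2) * A
              + (-(((n-(j-1):ℕ):ℝ) * ((n-(j+1):ℕ):ℝ) * X *
                ((n.choose j:ℝ) * ((n-j:ℕ):ℝ) + (n:ℝ) * ((n-1).choose j : ℝ)))) * (cid j (by omega))
        _ ≤ (n:ℝ)^2 * (n:ℝ)^2 * (((n-1).choose (j-1) : ℝ) * (((n-1).choose (j+1) : ℝ)) * t.esymm j ^ 2) := h0
        _ = ((n-j:ℕ):ℝ)^2 * (((n-(j-1):ℕ):ℝ) * ((n-(j+1):ℕ):ℝ)) * ((n.choose (j-1):ℝ) * ((n.choose (j+1):ℝ)) * Y) := by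
            linear_combination (((n-1).choose (j-1) : ℝ) * ((n-1).choose (j+1) : ℝ) * (n:ℝ)^2) * B
              + (((n-1).choose (j+1) : ℝ) * (n:ℝ) * ((n-j:ℕ):ℝ)^2 * Y) * (cid (j-1) (by omega))
              + ((n.choose (j-1) : ℝ) * ((n-(j-1):ℕ):ℝ) * ((n-j:ℕ):ℝ)^2 * Y) * (cid (j+1) (by omega))



lemma chain_alpha (k : ℕ) (p : ℕ → ℝ) (hp : ∀ j, j ≤ k → 0 < p j)
    (hN : ∀ j, 1 ≤ j → j + 1 ≤ k → p (j+1) * p (j-1) ≤ p j ^ 2) :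
    ∀ b a, 1 ≤ a → a < b → b ≤ k → p (a-1) * p b ≤ p (b-1) * p a := by
  intro b
  induction b with
  | zero => intro a _ h; omega
  | succ b ihb =>
      intro a ha hab hbk
      rcases eq_or_lt_of_le (Nat.lt_succ_iff.1 hab) with rfl | hlt
      · have := hN a ha (by omega)
        rw [show a + 1 - 1 = a by omega]
        nlinarith [this]
      · have hIH := ihb a ha hlt (by omega)
        have hNb := hN b (by omega) (by omega)
        have hb1 : 0 < p (b-1) := hp _ (by omega)
        have hb0 : 0 < p b := hp _ (by omega)
        have ha0 : 0 < p a := hp _ (by omega)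
        have ha1 : 0 < p (a-1) := hp _ (by omega)
        have hb2 : 0 < p (b+1) := hp _ (by omega)
        have key : (p (a-1) * p (b+1)) * (p (b-1) * p b) ≤ (p b * p a) * (p (b-1) * p b) := by
          calc (p (a-1) * p (b+1)) * (p (b-1) * p b)
              = (p (a-1) * p b) * (p (b+1) * p (b-1)) := by ring
            _ ≤ (p (b-1) * p a) * (p b ^ 2) := by
                apply mul_le_mul hIH hNb (by positivity) (by positivity)
            _ = (p b * p a) * (p (b-1) * p b) := by ring
        have := le_of_mul_le_mul_right key (by positivity)
        rw [show b + 1 - 1 = b by omega]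
        exact this

lemma chain_beta (k : ℕ) (p : ℕ → ℝ) (hp : ∀ j, j ≤ k → 0 < p j)
    (hN : ∀ j, 1 ≤ j → j + 1 ≤ k → p (j+1) * p (j-1) ≤ p j ^ 2) :
    ∀ m, 1 ≤ m → m ≤ k → p k ^ (m-1) * p (k-m) ≤ p (k-1) ^ m := by
  intro m
  induction m with
  | zero => omega
  | succ m ihm =>
      intro _ hmk
      rcases Nat.eq_or_lt_of_le (show 1 ≤ m + 1 by omega) with h1 | h1
      · rw [show m = 0 by omega]
        simp [pow_one]
      · have hm1 : 1 ≤ m := by omega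
        have hIH := ihm hm1 (by omega)
        have hα := chain_alpha k p hp hN k (k-m) (by omega) (by omega) le_rfl
        rw [show k - m - 1 = k - (m+1) by omega] at hα
        have hk1 : 0 < p (k-1) := hp _ (by omega)
        have hk0 : 0 < p k := hp _ (by omega)
        have hkm1 : 0 < p (k-(m+1)) := hp _ (by omega)
        have hkm : 0 < p (k-m) := hp _ (by omega)
        calc p k ^ (m+1-1) * p (k-(m+1))
            = p k ^ (m-1) * (p (k-(m+1)) * p k) := by
              have hpow : p k ^ m = p k ^ (m-1) * p k := by
                rw [← pow_succ, show m-1+1 = m by omega]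
              rw [show m+1-1 = m by omega, hpow]
              ring
          _ ≤ p k ^ (m-1) * (p (k-1) * p (k-m)) := by
              apply mul_le_mul_of_nonneg_left hα (by positivity)
          _ = p (k-1) * (p k ^ (m-1) * p (k-m)) := by ring
          _ ≤ p (k-1) * p (k-1) ^ m := by
              apply mul_le_mul_of_nonneg_left hIH (by positivity)
          _ = p (k-1) ^ (m+1) := by ring

lemma esymm_zero (n : ℕ) (lam : Fin n → ℝ) : esymm n 0 lam = 1 := by
  simp [esymm]

lemma esymm_update (n j : ℕ) (lam : Fin n → ℝ) (i : Fin n) (x : ℝ) :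
    esymm n j (Function.update lam i x)
      = esD n j lam i * x + esA n j lam i := by
  cases j with
  | zero =>
      rw [esymm_zero, esD]
      simp [esA]
  | succ j =>
      rw [esD, if_neg (by omega), Nat.succ_sub_one]
      unfold esymm
      have hu : (Finset.univ : Finset (Fin n)) = insert i (Finset.univ.erase i) :=
        (Finset.insert_erase (Finset.mem_univ i)).symm
      rw [hu, Finset.powersetCard_succ_insert (Finset.notMem_erase i _), Finset.sum_union,
        Finset.sum_image]
      · have h1 : ∀ s ∈ (Finset.univ.erase i).powersetCard (j+1),
            ∏ t ∈ s, Function.update lam i x t = ∏ t ∈ s, lam t := by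
          intro s hs
          refine Finset.prod_congr rfl fun t ht => ?_
          have : t ≠ i := Finset.ne_of_mem_erase ((Finset.mem_powersetCard.1 hs).1 ht)
          exact Function.update_of_ne this x lam
        have h2 : ∀ s ∈ (Finset.univ.erase i).powersetCard j,
            ∏ t ∈ insert i s, Function.update lam i x t = x * ∏ t ∈ s, lam t := by
          intro s hs
          have his : i ∉ s := fun h =>
            Finset.notMem_erase i _ ((Finset.mem_powersetCard.1 hs).1 h)
          rw [Finset.prod_insert his, Function.update_self]
          congr 1
          refine Finset.prod_congr rfl fun t ht => ?_
          have : t ≠ i := Finset.ne_of_mem_erase ((Finset.mem_powersetCard.1 hs).1 ht)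
          exact Function.update_of_ne this x lam
        rw [Finset.sum_congr rfl h1, Finset.sum_congr rfl h2, ← Finset.mul_sum]
        unfold esA
        ring
      · intro s hs u hu hsu
        have his : i ∉ s := fun h =>
          Finset.notMem_erase i _ ((Finset.mem_powersetCard.1 hs).1 h)
        have hiu : i ∉ u := fun h =>
          Finset.notMem_erase i _ ((Finset.mem_powersetCard.1 hu).1 h)
        rw [← Finset.erase_insert his, ← Finset.erase_insert hiu, hsu]
      · rw [Finset.disjoint_right]
        rintro s hs hss
        obtain ⟨u, hu, rfl⟩ := Finset.mem_image.1 hs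
        exact Finset.notMem_erase i _
          ((Finset.mem_powersetCard.1 hss).1 (Finset.mem_insert_self i u))

lemma esymm_eq_A (n j : ℕ) (lam : Fin n → ℝ) (i : Fin n) :
    esymm n j lam = esD n j lam i * lam i + esA n j lam i := by
  conv_lhs => rw [← Function.update_eq_self i lam]
  exact esymm_update n j lam i (lam i)

lemma sum_esA (n j : ℕ) (lam : Fin n → ℝ) :
    ∑ i, esA n j lam i = ((n - j : ℕ) : ℝ) * esymm n j lam := by
  have hfil : ∀ i : Fin n, (Finset.univ.erase i).powersetCard j
      = (Finset.univ.powersetCard j).filter (fun s => i ∉ s) := by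
    intro i
    ext t
    simp only [Finset.mem_powersetCard, Finset.mem_filter, Finset.subset_erase]
    tauto
  have : ∀ i : Fin n, esA n j lam i
      = ∑ s ∈ Finset.univ.powersetCard j, if i ∉ s then ∏ t ∈ s, lam t else 0 := by
    intro i
    rw [esA, hfil i, Finset.sum_filter]
  rw [Finset.sum_congr rfl fun i _ => this i, Finset.sum_comm]
  unfold esymm
  rw [Finset.mul_sum]
  refine Finset.sum_congr rfl fun s hs => ?_
  rw [Finset.mem_powersetCard_univ] at hs
  rw [← Finset.sum_filter]
  rw [Finset.sum_const]
  have : (Finset.univ.filter (fun i : Fin n => i ∉ s)) = sᶜ := by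
    ext t; simp
  rw [this, Finset.card_compl, hs, Fintype.card_fin, nsmul_eq_mul]

lemma sum_esD (n j : ℕ) (lam : Fin n → ℝ) (hj : 1 ≤ j) :
    ∑ i, esD n j lam i = ((n - (j-1) : ℕ) : ℝ) * esymm n (j-1) lam := by
  unfold esD
  rw [Finset.sum_congr rfl fun i _ => if_neg (by omega)]
  exact sum_esA n (j-1) lam






lemma rpow_alg (u pk pl : ℝ) (hu : 0 < u) (hpk : 0 < pk) (hpl : 0 < pl)
    (m : ℕ) (hm : 1 ≤ m) (c : ℝ) (hmc : (m:ℝ) * c = 1) :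
    u * ((pk ^ (m-1) * pl) ^ c / pl * (u * (pk / pl)) ^ (c-1)) = u ^ c := by
  have hA : ((m-1:ℕ):ℝ) * c = 1 - c := by
    rw [Nat.cast_sub hm]
    push_cast
    linear_combination hmc
  have h1 : (pk ^ (m-1) * pl) ^ c = pk ^ (1-c) * pl ^ c := by
    rw [Real.mul_rpow (by positivity) (by positivity), ← Real.rpow_natCast pk (m-1),
      ← Real.rpow_mul hpk.le, hA]
  have h2 : (u * (pk / pl)) ^ (c-1) = u ^ (c-1) * (pk ^ (c-1) * pl ^ (1-c)) := by
    rw [Real.mul_rpow hu.le (by positivity), Real.div_rpow hpk.le hpl.le, div_eq_mul_inv,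
      ← Real.rpow_neg hpl.le, show -(c-1) = 1-c by ring]
  rw [h1, h2]
  rw [show u * (pk ^ (1-c) * pl ^ c / pl * (u ^ (c-1) * (pk ^ (c-1) * pl ^ (1-c))))
      = (u * u ^ (c-1)) * (pk ^ (1-c) * pk ^ (c-1)) * (pl ^ c * pl ^ (1-c)) / pl by ring]
  rw [show u * u ^ (c-1) = u ^ c by
      nth_rewrite 1 [← Real.rpow_one u]
      rw [← Real.rpow_add hu]; norm_num]
  rw [← Real.rpow_add hpk, show (1-c) + (c-1) = 0 by ring, Real.rpow_zero]
  rw [← Real.rpow_add hpl, show c + (1-c) = 1 by ring, Real.rpow_one]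
  field_simp

/-- For `λ ∈ Γ_k` and `n ≥ k > l ≥ 0`,
`Σ_i ∂/∂λ_i [(σ_k/σ_l)^{1/(k-l)}](λ) ≥ (C(n,k)/C(n,l))^{1/(k-l)}`. -/
theorem stmt8 (n k l : ℕ) (hkn : k ≤ n) (hlk : l < k)
    (lam : Fin n → ℝ) (hlam : lam ∈ gardingCone n k) :
    ∃ d : Fin n → ℝ,
      (∀ i : Fin n,
        HasDerivAt (fun t : ℝ =>
          (esymm n k (Function.update lam i t) / esymm n l (Function.update lam i t))
            ^ ((1 : ℝ) / ((k : ℝ) - (l : ℝ))))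
          (d i) (lam i)) ∧
      ((n.choose k : ℝ) / (n.choose l)) ^ ((1 : ℝ) / ((k : ℝ) - (l : ℝ))) ≤ ∑ i, d i := by
  have hk1 : 1 ≤ k := by omega
  set m : ℕ := k - l with hmdef
  have hm1 : 1 ≤ m := by omega
  set c : ℝ := (1 : ℝ) / ((k : ℝ) - (l : ℝ)) with hcdef
  have hkl : (k : ℝ) - (l : ℝ) = (m : ℝ) := by
    rw [hmdef, Nat.cast_sub hlk.le]
  have hmpos : (0:ℝ) < (m:ℝ) := by exact_mod_cast hm1
  have hc0 : 0 < c := by rw [hcdef, hkl]; positivity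
  have hmc : (m:ℝ) * c = 1 := by rw [hcdef, hkl]; field_simp
  -- positivity of esymm and choose
  have he : ∀ j, j ≤ k → 0 < esymm n j lam := by
    intro j hj
    rcases Nat.eq_zero_or_pos j with rfl | hj1
    · rw [esymm_zero]; norm_num
    · exact hlam j hj1 hj
  have hC : ∀ j, j ≤ n → (0:ℝ) < (n.choose j : ℝ) := by
    intro j hj
    exact_mod_cast Nat.choose_pos hj
  set p : ℕ → ℝ := fun j => esymm n j lam / (n.choose j : ℝ) with hpdef
  have hp : ∀ j, j ≤ k → 0 < p j := by
    intro j hj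
    exact div_pos (he j hj) (hC j (by omega))
  have heCp : ∀ j, j ≤ n → esymm n j lam = (n.choose j : ℝ) * p j := by
    intro j hj
    rw [hpdef, mul_comm]
    exact (div_mul_cancel₀ _ (hC j hj).ne').symm
  have hN : ∀ j, 1 ≤ j → j + 1 ≤ k → p (j+1) * p (j-1) ≤ p j ^ 2 := by
    intro j hj1 hjk
    have hms : Multiset.card (Finset.univ.val.map lam) = n := by simp
    have hnewton := newton_ms (n - (j+1)) n j (by omega) hj1 (Finset.univ.val.map lam) hms
    rw [← esymm_bridge, ← esymm_bridge, ← esymm_bridge] at hnewton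
    rw [hpdef]
    simp only
    rw [div_mul_div_comm, div_pow, div_le_div_iff₀
      (mul_pos (hC (j+1) (by omega)) (hC (j-1) (by omega))) (pow_pos (hC j (by omega)) 2)]
    nlinarith [hnewton]
  -- derivative
  have hel : esymm n l lam ≠ 0 := (he l (by omega)).ne'
  have hek : esymm n k lam ≠ 0 := (he k le_rfl).ne'
  refine ⟨fun i => (esD n k lam i * esymm n l lam - esymm n k lam * esD n l lam i)
      / esymm n l lam ^ 2 * c * (esymm n k lam / esymm n l lam) ^ (c - 1), fun i => ?_, ?_⟩
  · have Hk : HasDerivAt (fun t => esymm n k (Function.update lam i t)) (esD n k lam i) (lam i) := by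
      have h := ((hasDerivAt_id (lam i)).const_mul (esD n k lam i)).add_const (esA n k lam i)
      rw [mul_one] at h
      have hfun : (fun t => esymm n k (Function.update lam i t))
          = (fun t => esD n k lam i * t + esA n k lam i) :=
        funext fun t => esymm_update n k lam i t
      rw [hfun]; exact h
    have Hl : HasDerivAt (fun t => esymm n l (Function.update lam i t)) (esD n l lam i) (lam i) := by
      have h := ((hasDerivAt_id (lam i)).const_mul (esD n l lam i)).add_const (esA n l lam i)
      rw [mul_one] at h
      have hfun : (fun t => esymm n l (Function.update lam i t))
          = (fun t => esD n l lam i * t + esA n l lam i) :=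
        funext fun t => esymm_update n l lam i t
      rw [hfun]; exact h
    have Hdiv := Hk.div Hl (by rw [Function.update_eq_self]; exact hel)
    simp only [Function.update_eq_self] at Hdiv
    have Hr := Hdiv.rpow_const (p := c) (Or.inl (div_ne_zero
      (by simp only [Function.update_eq_self]; exact hek) (by simp only [Function.update_eq_self]; exact hel)))
    simp only [Function.update_eq_self, Pi.div_apply] at Hr
    exact Hr
  · -- the inequality
    set Sk : ℝ := ∑ i, esD n k lam i with hSkdef
    set Sl : ℝ := ∑ i, esD n l lam i with hSldef
    set q : ℝ := esymm n k lam / esymm n l lam with hqdef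
    have hq0 : 0 < q := div_pos (he k le_rfl) (he l (by omega))
    have hsum : ∑ i, (esD n k lam i * esymm n l lam - esymm n k lam * esD n l lam i)
        / esymm n l lam ^ 2 * c * q ^ (c - 1)
        = (Sk * esymm n l lam - esymm n k lam * Sl) * (c * q ^ (c-1) / esymm n l lam ^ 2) := by
      rw [show (Sk * esymm n l lam - esymm n k lam * Sl) = ∑ i, (esD n k lam i * esymm n l lam
          - esymm n k lam * esD n l lam i) by
        rw [Finset.sum_sub_distrib, ← Finset.sum_mul, ← Finset.mul_sum]]
      rw [Finset.sum_mul]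
      refine Finset.sum_congr rfl fun i _ => ?_
      ring
    rw [hsum]
    -- nat identities
    have cidk : ((n.choose k : ℝ)) * (k:ℝ) = ((n.choose (k-1) : ℝ)) * ((n-(k-1) : ℕ) : ℝ) := by
      have h := Nat.choose_succ_right_eq n (k-1)
      rw [show k-1+1 = k by omega] at h
      exact_mod_cast congrArg (fun x : ℕ => (x:ℝ)) h
    have hSk : Sk = ((n-(k-1) : ℕ) : ℝ) * esymm n (k-1) lam := sum_esD n k lam hk1
    have h1 : Sk * esymm n l lam
        = (k:ℝ) * (n.choose k : ℝ) * p (k-1) * ((n.choose l : ℝ) * p l) := by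
      rw [hSk, heCp (k-1) (by omega), heCp l (by omega)]
      linear_combination (p (k-1) * ((n.choose l : ℝ) * p l)) * cidk.symm
    have h2 : esymm n k lam * Sl
        = (l:ℝ) * (n.choose l : ℝ) * p (l-1) * ((n.choose k : ℝ) * p k) := by
      rcases Nat.eq_zero_or_pos l with rfl | hl1
      · have : Sl = 0 := by
          rw [hSldef]
          refine Finset.sum_eq_zero fun i _ => ?_
          rw [esD, if_pos rfl]
        rw [this]
        norm_num
      · have cidl : ((n.choose l : ℝ)) * (l:ℝ) = ((n.choose (l-1) : ℝ)) * ((n-(l-1) : ℕ) : ℝ) := by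
          have h := Nat.choose_succ_right_eq n (l-1)
          rw [show l-1+1 = l by omega] at h
          exact_mod_cast congrArg (fun x : ℕ => (x:ℝ)) h
        have hSl : Sl = ((n-(l-1) : ℕ) : ℝ) * esymm n (l-1) lam := sum_esD n l lam hl1
        rw [hSl, heCp (l-1) (by omega), heCp k (by omega)]
        linear_combination (p (l-1) * ((n.choose k : ℝ) * p k)) * cidl.symm
    have hα : (l:ℝ) * (p (l-1) * p k) ≤ (l:ℝ) * (p (k-1) * p l) := by
      rcases Nat.eq_zero_or_pos l with rfl | hl1
      · norm_num
      · exact mul_le_mul_of_nonneg_left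
          (chain_alpha k p hp hN k l hl1 hlk le_rfl) (by positivity)
    have hT : (m:ℝ) * ((n.choose k : ℝ) * (n.choose l : ℝ)) * (p (k-1) * p l)
        ≤ Sk * esymm n l lam - esymm n k lam * Sl := by
      rw [h1, h2]
      have hCk := hC k hkn
      have hCl := hC l (by omega)
      have hα2 := mul_le_mul_of_nonneg_left hα
        (show (0:ℝ) ≤ (n.choose k : ℝ) * (n.choose l : ℝ) by positivity)
      have hkl2 : ((k:ℝ) - (l:ℝ)) * ((n.choose k:ℝ) * (n.choose l:ℝ) * (p (k-1) * p l))
          = (m:ℝ) * ((n.choose k:ℝ) * (n.choose l:ℝ) * (p (k-1) * p l)) := by rw [hkl]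
      nlinarith [hα2, hkl2]
    have hβ : (p k ^ (m-1) * p l) ^ c ≤ p (k-1) := by
      have hb := chain_beta k p hp hN m hm1 (by omega)
      rw [show k - m = l by omega] at hb
      have hr := Real.rpow_le_rpow (mul_pos (pow_pos (hp k le_rfl) _) (hp l (by omega))).le hb hc0.le
      rwa [← Real.rpow_natCast (p (k-1)) m, ← Real.rpow_mul (hp (k-1) (by omega)).le,
        hmc, Real.rpow_one] at hr
    -- final chain
    have hpl := hp l (by omega)
    have hpk := hp k le_rfl
    have hpk1 := hp (k-1) (by omega)
    have hCk := hC k hkn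
    have hCl := hC l (by omega)
    have hqpos : (0:ℝ) < q ^ (c-1) := Real.rpow_pos_of_pos hq0 _
    have hfac : (0:ℝ) < c * q ^ (c-1) / esymm n l lam ^ 2 :=
      div_pos (mul_pos hc0 hqpos) (pow_pos (he l (by omega)) 2)
    have hmono := mul_le_mul_of_nonneg_right hT hfac.le
    refine le_trans ?_ hmono
    -- show (Ck/Cl)^c ≤ m*(Ck*Cl)*(p(k-1)*pl)*(c*q^{c-1}/el²)
    have hu : (0:ℝ) < (n.choose k : ℝ) / (n.choose l : ℝ) := by positivity
    have hqrw : q = ((n.choose k : ℝ) / (n.choose l : ℝ)) * (p k / p l) := by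
      rw [hqdef, heCp k (by omega), heCp l (by omega)]
      field_simp
    have heq : (m:ℝ) * ((n.choose k : ℝ) * (n.choose l : ℝ)) * (p (k-1) * p l)
          * (c * q ^ (c-1) / esymm n l lam ^ 2)
        = ((n.choose k : ℝ) / (n.choose l : ℝ)) * (p (k-1) / p l * q ^ (c-1)) := by
      rw [heCp l (by omega)]
      have hCl0 : (n.choose l : ℝ) ≠ 0 := hCl.ne'
      have hpl0 : p l ≠ 0 := hpl.ne'
      clear_value p q c
      calc _ = ((m:ℝ) * c) * (((n.choose k : ℝ) / (n.choose l : ℝ)) * (p (k-1) / p l * q ^ (c-1))) := by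
              field_simp
        _ = _ := by rw [hmc, one_mul]
    rw [heq]
    have hstep : ((n.choose k : ℝ) / (n.choose l : ℝ)) ^ c
        = ((n.choose k : ℝ) / (n.choose l : ℝ))
          * ((p k ^ (m-1) * p l) ^ c / p l * q ^ (c-1)) := by
      rw [hqrw]
      exact (rpow_alg _ (p k) (p l) hu hpk hpl m hm1 c hmc).symm
    rw [hstep]
    apply mul_le_mul_of_nonneg_left _ hu.le
    exact mul_le_mul_of_nonneg_right ((div_le_div_iff_of_pos_right hpl).mpr hβ) hqpos.le
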